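/- Let A be a real n × m matrix with distinct columns a_1,...,a_m and let c ∈ ℝ^m. If the signomial f(x) = Σ_{i=1}^m c_i exp(a_iᵀ x) is nonnegative on all of ℝ^n and a_k is an extreme point of the convex hull of {a_1,...,a_m}, then c_k ≥ 0. -/

import Mathlib

open Filter Topology

theorem stmt_3 (n m : ℕ) (a : Fin m → (Fin n → ℝ)) (ha : Function.Injective a)
    (c : Fin m → ℝ)
    (hf : ∀ x : Fin n → ℝ, 0 ≤ ∑ i, c i * Real.exp (∑ j, a i j * x j))
    (k : Fin m)
    (hk : a k ∈ Set.extremePoints ℝ (convexHull ℝ (Set.range a))) :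
    0 ≤ c k := by
  -- a k is not in the convex hull of the other points
  rw [(convex_convexHull ℝ _).mem_extremePoints_iff_mem_diff_convexHull_diff] at hk
  obtain ⟨hk1, hk2⟩ := hk
  have hnot : a k ∉ convexHull ℝ (Set.range a \ {a k}) := by
    intro h
    apply hk2
    refine convexHull_mono ?_ h
    intro y hy
    exact ⟨subset_convexHull ℝ _ hy.1, hy.2⟩
  -- separate
  obtain ⟨f, u, hfu, huf⟩ := geometric_hahn_banach_closed_point
    (convex_convexHull ℝ _)
    ((Set.toFinite (Set.range a \ {a k})).isClosed_convexHull ℝ) hnot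
  have hsep : ∀ i : Fin m, i ≠ k → f (a i) < f (a k) := by
    intro i hi
    have : a i ∈ convexHull ℝ (Set.range a \ {a k}) :=
      subset_convexHull ℝ _ ⟨Set.mem_range_self i, fun h => hi (ha h)⟩
    exact (hfu _ this).trans huf
  -- linear functional as dot product
  set y : Fin n → ℝ := fun j => f (Pi.single j 1) with hy
  have hfv : ∀ v : Fin n → ℝ, f v = ∑ j, v j * y j := by
    intro v
    have hv : v = ∑ j, v j • (Pi.single j 1 : Fin n → ℝ) := by
      ext i
      simp [Finset.sum_apply, Pi.single_apply]
    conv_lhs => rw [hv]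
    rw [map_sum]
    simp [hy, smul_eq_mul]
  -- the function g
  set g : ℝ → ℝ := fun t => ∑ i, c i * Real.exp (t * (f (a i) - f (a k))) with hg
  have hg0 : ∀ t : ℝ, 0 ≤ g t := by
    intro t
    have h1 := hf (fun j => t * y j)
    have h2 : (0:ℝ) ≤ (∑ i, c i * Real.exp (∑ j, a i j * (t * y j))) *
        Real.exp (-(t * f (a k))) :=
      mul_nonneg h1 (Real.exp_nonneg _)
    rw [Finset.sum_mul] at h2
    have key : ∀ i : Fin m, ∑ j, a i j * (t * y j) = t * f (a i) := by
      intro i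
      rw [hfv (a i), Finset.mul_sum]
      exact Finset.sum_congr rfl fun j _ => by ring
    convert h2 using 2 with i _
    rw [mul_assoc, ← Real.exp_add, key i]
    congr 2
    ring
  -- limit
  have hlim : Tendsto g atTop (𝓝 (c k)) := by
    have : Tendsto (fun t => ∑ i, c i * Real.exp (t * (f (a i) - f (a k)))) atTop
        (𝓝 (∑ i, if i = k then c k else 0)) := by
      apply tendsto_finset_sum
      intro i _
      by_cases hik : i = k
      · subst hik
        simp only [if_pos rfl, sub_self, mul_zero, Real.exp_zero, mul_one]
        exact tendsto_const_nhds
      · simp only [if_neg hik]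
        rw [show (0:ℝ) = c i * 0 by ring]
        apply Tendsto.const_mul
        have hneg : f (a i) - f (a k) < 0 := sub_neg.mpr (hsep i hik)
        have := Real.tendsto_exp_atBot
        apply this.comp
        exact tendsto_id.atTop_mul_const_of_neg hneg
    simpa using this
  exact ge_of_tendsto' hlim hg0
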